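/- Let G be a directed graph with inconsistent edges E^i, and let C be a sink of the strict partial order <⊕ on the quotient 𝔼 of source-equivalence classes (i.e., a maximal element). Then the set coupled⊕(C) is upward closed: if C₀ ∈ coupled⊕(C) and C₀ <⊕ C₁, then C₁ ∈ coupled⊕(C). -/

import Mathlib

namespace CQA

variable {V : Type*}

/-- Directed reachability along edges in `A`. -/
def reach (A : Set (V × V)) (u v : V) : Prop :=
  Relation.ReflTransGen (fun x y => (x, y) ∈ A) u v

/-- `u` and `v` are in the same strongly connected component of the graph with edges `E`. -/
def sameSCC (E : Set (V × V)) (u v : V) : Prop := reach E u v ∧ reach E v u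

/-- There is an undirected path in `E` from `a` to `b` all of whose vertices
(including the endpoints) avoid the set `A`. -/
def ureach (E : Set (V × V)) (A : Set V) (a b : V) : Prop :=
  a ∉ A ∧ Relation.ReflTransGen (fun x y => ((x, y) ∈ E ∨ (y, x) ∈ E) ∧ y ∉ A) a b

/-- `u_R^{+,R}`: vertices reachable from the source of `R` in `G − {R}`. -/
def uplus (E : Set (V × V)) (R : V × V) : Set V := {v | reach (E \ {R}) R.1 v}

/-- `u^⊕`: vertices reachable from `u` using only consistent edges `Ec`. -/
def uoplus (Ec : Set (V × V)) (u : V) : Set V := {v | reach Ec u v}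

/-- `C` is a source-equivalence class of inconsistent edges `Ei`. -/
def IsClass (E Ei : Set (V × V)) (C : Set (V × V)) : Prop :=
  ∃ R ∈ Ei, C = {S ∈ Ei | sameSCC E R.1 S.1}

/-- `C^⊕ = ⋂_{R ∈ C} u_R^⊕`. -/
def Coplus (Ec : Set (V × V)) (C : Set (V × V)) : Set V :=
  {v | ∀ R ∈ C, v ∈ uoplus Ec R.1}

/-- `C⁺ = ⋂_{R ∈ C} u_R^{+,R}`. -/
def Cplus (E : Set (V × V)) (C : Set (V × V)) : Set V :=
  {v | ∀ R ∈ C, v ∈ uplus E R}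

/-- `C₁ ≤⊕ C₂` iff some `S ∈ C₂` has `u_S ∈ C₁^⊕`. -/
def leOplus (Ec : Set (V × V)) (C₁ C₂ : Set (V × V)) : Prop :=
  ∃ S ∈ C₂, S.1 ∈ Coplus Ec C₁

/-- The strict order `C₁ <⊕ C₂`. -/
def ltOplus (Ec : Set (V × V)) (C₁ C₂ : Set (V × V)) : Prop :=
  leOplus Ec C₁ C₂ ∧ C₁ ≠ C₂

/-- A sink: a maximal element of `<⊕` among source-equivalence classes. -/
def IsSink (E Ei Ec : Set (V × V)) (C : Set (V × V)) : Prop :=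
  IsClass E Ei C ∧ ∀ C', IsClass E Ei C' → ¬ ltOplus Ec C C'

/-- `C' ∈ coupled⊕(C)`. -/
def coupledOplusCl (E Ec : Set (V × V)) (C C' : Set (V × V)) : Prop :=
  C' = C ∨ ∃ R ∈ C, ∃ S ∈ C', ureach E (Coplus Ec C) R.2 S.1

/-- `C' ∈ coupled⁺(C)`. -/
def coupledPlusCl (E : Set (V × V)) (C C' : Set (V × V)) : Prop :=
  C' = C ∨ ∃ R ∈ C, ∃ S ∈ C', ureach E (Cplus E C) R.2 S.1

/-- `S ∈ coupled⁺(R)` for inconsistent edges `R, S`: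
either `S ∈ [R]`, or there is an undirected path `v_R ↔ u_S` avoiding `u_R^{+,R}`. -/
def coupledPlusEdge (E Ei : Set (V × V)) (R S : V × V) : Prop :=
  S ∈ Ei ∧ (sameSCC E R.1 S.1 ∨ ureach E (uplus E R) R.2 S.1)

/-- `G` is splittable: every coupled pair of inconsistent edges is source-equivalent. -/
def Splittable (E Ec : Set (V × V)) : Prop :=
  ∀ R ∈ E \ Ec, ∀ S ∈ E \ Ec,
    coupledPlusEdge E (E \ Ec) R S → coupledPlusEdge E (E \ Ec) S R → sameSCC E R.1 S.1

/-- `G` is f-closed: for every inconsistent edge `R`,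
`v_R^⊕ ∩ u_R^{+,R} ⊆ u_R^⊕`. -/
def FClosed (E Ec : Set (V × V)) : Prop :=
  ∀ R ∈ E \ Ec, ∀ v, v ∈ uoplus Ec R.2 → v ∈ uplus E R → v ∈ uoplus Ec R.1

end CQA

open CQA in
lemma coplus_closed_aux {V : Type*} (Ec : Set (V × V)) (C : Set (V × V)) {v w : V}
    (hv : v ∈ Coplus Ec C) (hvw : reach Ec v w) : w ∈ Coplus Ec C :=
  fun R hR => Relation.ReflTransGen.trans (hv R hR) hvw

lemma restrict_path_aux {V : Type*} {r : V → V → Prop} {A : Set V}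
    (hA : ∀ v w, v ∈ A → Relation.ReflTransGen r v w → w ∈ A)
    {a b : V} (h : Relation.ReflTransGen r a b) (hb : b ∉ A) :
    Relation.ReflTransGen (fun x y => r x y ∧ y ∉ A) a b := by
  induction h using Relation.ReflTransGen.head_induction_on with
  | refl => exact .refl
  | head hac hcb ih =>
      exact .head ⟨hac, fun hcA => hb (hA _ _ hcA hcb)⟩ ih

open CQA in
/-- for a sink C, coupled⊕(C) is upward closed under <⊕. -/
theorem stmt_8 {V : Type*} [Fintype V] (E Ec : Set (V × V)) (hEc : Ec ⊆ E)
    (C : Set (V × V)) (hC : IsSink E (E \ Ec) Ec C)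
    (C₀ C₁ : Set (V × V)) (h₀ : IsClass E (E \ Ec) C₀) (h₁ : IsClass E (E \ Ec) C₁)
    (hc : coupledOplusCl E Ec C C₀) (hlt : ltOplus Ec C₀ C₁) :
    coupledOplusCl E Ec C C₁ := by
  obtain ⟨⟨S₁, hS₁, hS₁C₀⟩, hne⟩ := hlt
  rcases hc with rfl | ⟨R, hR, S₀, hS₀, hur⟩
  · exact absurd ⟨⟨S₁, hS₁, hS₁C₀⟩, hne⟩ (hC.2 C₁ h₁)
  · by_cases hS₁A : S₁.1 ∈ Coplus Ec C
    · by_cases hCC₁ : C₁ = C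
      · exact Or.inl hCC₁
      · exact absurd ⟨⟨S₁, hS₁, hS₁A⟩, fun h => hCC₁ h.symm⟩ (hC.2 C₁ h₁)
    · have hpath : reach Ec S₀.1 S₁.1 := hS₁C₀ S₀ hS₀
      have hres := restrict_path_aux
        (fun v w hv hvw => coplus_closed_aux Ec C hv hvw) hpath hS₁A
      refine Or.inr ⟨R, hR, S₁, hS₁, hur.1, Relation.ReflTransGen.trans hur.2 ?_⟩
      exact Relation.ReflTransGen.mono
        (fun x y (h : (x, y) ∈ Ec ∧ y ∉ Coplus Ec C) =>
          (⟨Or.inl (hEc h.1), h.2⟩ : ((x, y) ∈ E ∨ (y, x) ∈ E) ∧ y ∉ Coplus Ec C)) _ _ hres
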